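/- Let p ∈ (1,∞), β > 0, α = -β, ε > 0. For k ∈ ℕ define u_k(s) = 1_{[k,k+1]}(s) e^{-ε(s-k)}. Then ‖u_k‖_{L^p_α(0,∞)} ≤ k^{-β} ‖e^{-ε(·)}‖_{L^p(0,1)}, while for every δ ∈ (0,1], ∫_k^{k+δ} e^{-ε(k+δ-s)} e^{-ε(s-k)} ds = δ e^{-εδ}. In particular, the convolution (e^{-ε·} * u_k)(k+δ) does not tend to 0 uniformly relative to ‖u_k‖_{L^p_α}, so there is no constant K with sup_t |(e^{-ε·} * u)(t)| ≤ K ‖u‖_{L^p_α(0,∞)} for all u. -/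

import Mathlib

open MeasureTheory Set Real

set_option maxHeartbeats 1000000 in
/-- With `T(t) = e^{-εt}` on ℂ, `α = -β < 0`, and
`u_k = 1_{[k,k+1]} e^{-ε(·-k)}`: (1) `‖u_k‖_{L^p_α(0,∞)} ≤ k^{-β} ‖e^{-ε·}‖_{L^p(0,1)}`;
(2) for `δ ∈ (0,1]`, `∫_k^{k+δ} e^{-ε(k+δ-s)} e^{-ε(s-k)} ds = δ e^{-εδ}`;
(3) hence there is no constant `K` with
`sup_{t>0} |(e^{-ε·} * u)(t)| ≤ K ‖u‖_{L^p_α(0,∞)}` for all `u`. -/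
theorem stmt1 (p p' α β ε : ℝ) (hp : 1 < p) (hpp' : 1 / p + 1 / p' = 1)
    (hβ : 0 < β) (hα : α = -β) (hε : 0 < ε) :
    (∀ k : ℕ, 1 ≤ k →
      (∫ s in Ioi (0:ℝ),
          (s ^ α * ((Icc (k:ℝ) (k+1)).indicator (fun s => Real.exp (-ε * (s - k))) s)) ^ p) ^ (1/p)
        ≤ (k:ℝ) ^ (-β) * (∫ s in Ioo (0:ℝ) 1, Real.exp (-ε * s) ^ p) ^ (1/p)) ∧
    (∀ k : ℕ, ∀ δ : ℝ, 0 < δ → δ ≤ 1 →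
      ∫ s in Ioc (k:ℝ) (k+δ), Real.exp (-ε * ((k+δ) - s)) * Real.exp (-ε * (s - k))
        = δ * Real.exp (-ε * δ)) ∧
    ¬ ∃ K : ℝ, ∀ u : ℝ → ℝ, Measurable u →
        IntegrableOn (fun s => (s ^ α * |u s|) ^ p) (Ioi 0) →
        ∀ t : ℝ, 0 < t →
          |∫ s in Ioo 0 t, Real.exp (-ε * (t - s)) * u s| ≤
            K * (∫ s in Ioi (0:ℝ), (s ^ α * |u s|) ^ p) ^ (1/p) := by
  have hp0 : (0:ℝ) < p := lt_trans one_pos hp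
  have hpne : p ≠ 0 := ne_of_gt hp0
  -- Part 1
  have h1 : ∀ k : ℕ, 1 ≤ k →
      (∫ s in Ioi (0:ℝ),
          (s ^ α * ((Icc (k:ℝ) (k+1)).indicator (fun s => Real.exp (-ε * (s - k))) s)) ^ p) ^ (1/p)
        ≤ (k:ℝ) ^ (-β) * (∫ s in Ioo (0:ℝ) 1, Real.exp (-ε * s) ^ p) ^ (1/p) := by
    intro k hk
    have hk1 : (1:ℝ) ≤ (k:ℝ) := by exact_mod_cast hk
    have hk0 : (0:ℝ) < (k:ℝ) := lt_of_lt_of_le one_pos hk1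
    set g : ℝ → ℝ := fun s => Real.exp (-ε * (s - (k:ℝ))) with hg
    set f : ℝ → ℝ := fun x => ((x + (k:ℝ)) ^ α * Real.exp (-ε * x)) ^ p with hf
    have hind : (fun s : ℝ => (s ^ α * ((Icc (k:ℝ) (k+1)).indicator g) s) ^ p)
        = (Icc (k:ℝ) (k+1)).indicator (fun s => (s ^ α * g s) ^ p) := by
      funext s
      by_cases hs : s ∈ Icc (k:ℝ) (k+1)
      · simp [hs]
      · simp [hs, Real.zero_rpow hpne]
    have step1 : (∫ s in Ioi (0:ℝ),
        (s ^ α * ((Icc (k:ℝ) (k+1)).indicator g) s) ^ p)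
        = ∫ x in Ioo (0:ℝ) 1, f x := by
      rw [hind, setIntegral_indicator measurableSet_Icc]
      have hI : Ioi (0:ℝ) ∩ Icc (k:ℝ) (k+1) = Icc (k:ℝ) (k+1) :=
        inter_eq_self_of_subset_right (fun s hs => lt_of_lt_of_le hk0 hs.1)
      rw [hI, integral_Icc_eq_integral_Ioc,
        ← intervalIntegral.integral_of_le (by linarith : (k:ℝ) ≤ (k:ℝ)+1)]
      have e1 : ∫ s in (k:ℝ)..((k:ℝ)+1), (s ^ α * g s) ^ p
          = ∫ s in (k:ℝ)..((k:ℝ)+1), f (s - (k:ℝ)) := by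
        apply intervalIntegral.integral_congr
        intro s _
        simp only [hf, hg, sub_add_cancel]
      rw [e1, intervalIntegral.integral_comp_sub_right f (k:ℝ), sub_self,
        add_sub_cancel_left, intervalIntegral.integral_of_le (by norm_num : (0:ℝ) ≤ 1),
        integral_Ioc_eq_integral_Ioo]
    rw [step1]
    -- bound the integral
    have hconts : ContinuousOn f (Icc (0:ℝ) 1) := by
      apply ContinuousOn.rpow_const
      · apply ContinuousOn.mul
        · apply ContinuousOn.rpow_const
          · exact (continuous_id.add continuous_const).continuousOn
          · intro x hx
            exact Or.inl (ne_of_gt (by have h := hx.1; linarith))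
        · exact (Real.continuous_exp.comp (continuous_const.mul continuous_id)).continuousOn
      · exact fun x _ => Or.inr hp0.le
    have hintf : IntegrableOn f (Ioo (0:ℝ) 1) :=
      (hconts.integrableOn_Icc).mono_set Ioo_subset_Icc_self
    have hcontg : Continuous fun x : ℝ => ((k:ℝ) ^ (-β)) ^ p * Real.exp (-ε * x) ^ p := by
      apply Continuous.mul continuous_const
      apply Continuous.rpow_const
      · exact Real.continuous_exp.comp (continuous_const.mul continuous_id)
      · exact fun x => Or.inr hp0.le
    have hintg : IntegrableOn (fun x : ℝ => ((k:ℝ) ^ (-β)) ^ p * Real.exp (-ε * x) ^ p)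
        (Ioo (0:ℝ) 1) := (hcontg.integrableOn_Icc).mono_set Ioo_subset_Icc_self
    have hmono : ∫ x in Ioo (0:ℝ) 1, f x
        ≤ ∫ x in Ioo (0:ℝ) 1, ((k:ℝ) ^ (-β)) ^ p * Real.exp (-ε * x) ^ p := by
      apply setIntegral_mono_on hintf hintg measurableSet_Ioo
      intro x hx
      have hx0 : 0 ≤ x := hx.1.le
      have hb : (x + (k:ℝ)) ^ α ≤ (k:ℝ) ^ (-β) := by
        rw [hα]
        exact Real.rpow_le_rpow_of_nonpos hk0 (by linarith) (by linarith)
      have hbn : 0 ≤ (x + (k:ℝ)) ^ α := Real.rpow_nonneg (by linarith) α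
      calc f x ≤ ((k:ℝ) ^ (-β) * Real.exp (-ε * x)) ^ p := by
            apply Real.rpow_le_rpow (mul_nonneg hbn (Real.exp_pos _).le)
              (mul_le_mul_of_nonneg_right hb (Real.exp_pos _).le) hp0.le
        _ = ((k:ℝ) ^ (-β)) ^ p * Real.exp (-ε * x) ^ p :=
            Real.mul_rpow (Real.rpow_nonneg hk0.le _) (Real.exp_pos _).le
    rw [integral_const_mul] at hmono
    have hIn : 0 ≤ ∫ x in Ioo (0:ℝ) 1, f x :=
      setIntegral_nonneg measurableSet_Ioo fun x hx => Real.rpow_nonneg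
        (mul_nonneg (Real.rpow_nonneg (by have h := hx.1; linarith) _) (Real.exp_pos _).le) p
    have hJn : 0 ≤ ∫ x in Ioo (0:ℝ) 1, Real.exp (-ε * x) ^ p :=
      setIntegral_nonneg measurableSet_Ioo fun x _ => Real.rpow_nonneg (Real.exp_pos _).le p
    calc (∫ x in Ioo (0:ℝ) 1, f x) ^ (1/p)
        ≤ (((k:ℝ) ^ (-β)) ^ p * ∫ x in Ioo (0:ℝ) 1, Real.exp (-ε * x) ^ p) ^ (1/p) :=
          Real.rpow_le_rpow hIn hmono (by positivity)
      _ = (k:ℝ) ^ (-β) * (∫ x in Ioo (0:ℝ) 1, Real.exp (-ε * x) ^ p) ^ (1/p) := by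
          rw [Real.mul_rpow (Real.rpow_nonneg (Real.rpow_nonneg hk0.le _) _) hJn,
            ← Real.rpow_mul (Real.rpow_nonneg hk0.le _), mul_one_div_cancel hpne,
            Real.rpow_one]
  -- Part 2
  have h2 : ∀ k : ℕ, ∀ δ : ℝ, 0 < δ → δ ≤ 1 →
      ∫ s in Ioc (k:ℝ) ((k:ℝ)+δ), Real.exp (-ε * (((k:ℝ)+δ) - s)) * Real.exp (-ε * (s - (k:ℝ)))
        = δ * Real.exp (-ε * δ) := by
    intro k δ hδ0 _
    have hc : ∀ s : ℝ, Real.exp (-ε * (((k:ℝ)+δ) - s)) * Real.exp (-ε * (s - (k:ℝ)))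
        = Real.exp (-ε * δ) := by
      intro s
      rw [← Real.exp_add]
      ring_nf
    simp_rw [hc]
    rw [setIntegral_const, measureReal_def, Real.volume_Ioc, smul_eq_mul]
    congr 1
    rw [ENNReal.toReal_ofReal (by linarith)]
    ring
  refine ⟨h1, h2, ?_⟩
  -- Part 3
  rintro ⟨K, hK⟩
  set C : ℝ := (∫ s in Ioo (0:ℝ) 1, Real.exp (-ε * s) ^ p) ^ (1/p) with hC
  have hC0 : 0 ≤ C := Real.rpow_nonneg
    (setIntegral_nonneg measurableSet_Ioo fun x _ => Real.rpow_nonneg (Real.exp_pos _).le p) _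
  set M : ℝ := max K 0 * C with hM
  have hM0 : 0 ≤ M := mul_nonneg (le_max_right _ _) hC0
  obtain ⟨k₀, hk₀⟩ := exists_nat_gt ((M * Real.exp ε) ^ (1/β))
  set k : ℕ := max k₀ 1 with hkdef
  have hk1 : 1 ≤ k := le_max_right _ _
  have hk1' : (1:ℝ) ≤ (k:ℝ) := by exact_mod_cast hk1
  have hk0 : (0:ℝ) < (k:ℝ) := lt_of_lt_of_le one_pos hk1'
  have hkX : ((M * Real.exp ε) ^ (1/β)) < (k:ℝ) :=
    lt_of_lt_of_le hk₀ (by exact_mod_cast le_max_left k₀ 1)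
  set u : ℝ → ℝ := fun s => (Icc (k:ℝ) ((k:ℝ)+1)).indicator
    (fun s => Real.exp (-ε * (s - (k:ℝ)))) s with hu
  have humeas : Measurable u :=
    ((Real.continuous_exp.comp (continuous_const.mul (continuous_id.sub continuous_const))).measurable).indicator measurableSet_Icc
  have habs : ∀ s, |u s| = u s := fun s =>
    abs_of_nonneg (Set.indicator_nonneg (fun _ _ => (Real.exp_pos _).le) s)
  have hrepr : (fun s : ℝ => (s ^ α * |u s|) ^ p)
      = (Icc (k:ℝ) ((k:ℝ)+1)).indicator
        (fun s => (s ^ α * Real.exp (-ε * (s - (k:ℝ)))) ^ p) := by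
    funext s
    by_cases hs : s ∈ Icc (k:ℝ) ((k:ℝ)+1)
    · simp [hu, hs, abs_of_nonneg (Real.exp_pos (-ε * (s - (k:ℝ)))).le]
    · simp [hu, hs, Real.zero_rpow hpne]
  have hcont2 : ContinuousOn (fun s : ℝ => (s ^ α * Real.exp (-ε * (s - (k:ℝ)))) ^ p)
      (Icc (k:ℝ) ((k:ℝ)+1)) := by
    apply ContinuousOn.rpow_const
    · apply ContinuousOn.mul
      · apply ContinuousOn.rpow_const continuous_id.continuousOn
        intro x hx
        exact Or.inl (ne_of_gt (lt_of_lt_of_le hk0 hx.1))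
      · exact (Real.continuous_exp.comp (continuous_const.mul (continuous_id.sub continuous_const))).continuousOn
    · exact fun x _ => Or.inr hp0.le
  have hint : IntegrableOn (fun s : ℝ => (s ^ α * |u s|) ^ p) (Ioi 0) := by
    rw [hrepr]
    exact ((hcont2.integrableOn_Icc).integrable_indicator measurableSet_Icc).integrableOn
  have hbig := hK u humeas hint ((k:ℝ)+1) (by linarith)
  -- compute the convolution value
  have hconv : ∫ s in Ioo (0:ℝ) ((k:ℝ)+1), Real.exp (-ε * (((k:ℝ)+1) - s)) * u s
      = Real.exp (-ε) := by
    have hfun : (fun s : ℝ => Real.exp (-ε * (((k:ℝ)+1) - s)) * u s)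
        = (Icc (k:ℝ) ((k:ℝ)+1)).indicator
          (fun s => Real.exp (-ε * (((k:ℝ)+1) - s)) * Real.exp (-ε * (s - (k:ℝ)))) := by
      funext s
      by_cases hs : s ∈ Icc (k:ℝ) ((k:ℝ)+1) <;> simp [hu, hs]
    rw [hfun, setIntegral_indicator measurableSet_Icc]
    have hI : Ioo (0:ℝ) ((k:ℝ)+1) ∩ Icc (k:ℝ) ((k:ℝ)+1) = Ico (k:ℝ) ((k:ℝ)+1) := by
      ext s
      constructor
      · rintro ⟨⟨_, h2'⟩, h3, _⟩; exact ⟨h3, h2'⟩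
      · rintro ⟨ha, hb⟩; exact ⟨⟨lt_of_lt_of_le hk0 ha, hb⟩, ha, hb.le⟩
    rw [hI, integral_Ico_eq_integral_Ioo, ← integral_Ioc_eq_integral_Ioo]
    have := h2 k 1 one_pos le_rfl
    simpa using this
  rw [hconv] at hbig
  set N : ℝ := (∫ s in Ioi (0:ℝ), (s ^ α * |u s|) ^ p) ^ (1/p) with hN
  have hN0 : 0 ≤ N := Real.rpow_nonneg
    (setIntegral_nonneg measurableSet_Ioi fun s hs => Real.rpow_nonneg
      (mul_nonneg (Real.rpow_nonneg (le_of_lt hs) _) (abs_nonneg _)) p) _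
  have hNle : N ≤ (k:ℝ) ^ (-β) * C := by
    rw [hN]
    simp_rw [habs]
    exact h1 k hk1
  have habs' : |Real.exp (-ε)| = Real.exp (-ε) := abs_of_nonneg (Real.exp_pos _).le
  rw [habs'] at hbig
  have hfin : Real.exp (-ε) ≤ M * (k:ℝ) ^ (-β) := by
    calc Real.exp (-ε) ≤ K * N := hbig
      _ ≤ max K 0 * N := mul_le_mul_of_nonneg_right (le_max_left _ _) hN0
      _ ≤ max K 0 * ((k:ℝ) ^ (-β) * C) :=
          mul_le_mul_of_nonneg_left hNle (le_max_right _ _)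
      _ = M * (k:ℝ) ^ (-β) := by rw [hM]; ring
  -- derive contradiction
  have hMpos : 0 < M := by
    rcases lt_or_eq_of_le hM0 with h | h
    · exact h
    · exfalso; rw [← h] at hfin; simp at hfin
      nlinarith [Real.exp_pos (-ε)]
  have hXnn : 0 ≤ (M * Real.exp ε) ^ (1/β) :=
    Real.rpow_nonneg (mul_nonneg hM0 (Real.exp_pos _).le) _
  have hkβ : M * Real.exp ε < (k:ℝ) ^ β := by
    have := Real.rpow_lt_rpow hXnn hkX hβ
    rwa [← Real.rpow_mul (mul_nonneg hM0 (Real.exp_pos _).le),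
      one_div_mul_cancel hβ.ne', Real.rpow_one] at this
  have hkβ0 : (0:ℝ) < (k:ℝ) ^ β := Real.rpow_pos_of_pos hk0 β
  have hlt : M * (k:ℝ) ^ (-β) < Real.exp (-ε) := by
    rw [Real.rpow_neg hk0.le, ← div_eq_mul_inv, div_lt_iff₀ hkβ0]
    have h := mul_lt_mul_of_pos_right hkβ (Real.exp_pos (-ε))
    rw [mul_assoc, ← Real.exp_add] at h
    simp only [add_neg_cancel, Real.exp_zero, mul_one] at h
    rwa [mul_comm ((k:ℝ) ^ β)] at h
  linarith
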